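/- Closed-loop design separation (sufficiency): let Φx, Φu satisfy (zI - A)Φx - BΦu = I, and let P_c, M_c satisfy [Φx; Φu]·Δ_c = [P_c; M_c] where Δ_c = (zI - A)P_c - B M_c is invertible. Then S = [[Φx, Φx B, Φx(zI - A) - I],[Φu, I + Φu B, Φu(zI - A)],[z⁻¹Δ_c⁻¹, z⁻¹Δ_c⁻¹B, z⁻¹Δ_c⁻¹(zI - A)]] satisfies S(I - R) = I for R = [[A + (1-z)I, B, 0],[0, 0, zM_c],[I, 0, I - zP_c]]. -/

import Mathlib

set_option synthInstance.maxHeartbeats 1000000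
set_option maxHeartbeats 1000000

noncomputable section

/-- A 3×3 block matrix. -/
def blk3 {n m p α : Type*}
    (M11 : Matrix n n α) (M12 : Matrix n m α) (M13 : Matrix n p α)
    (M21 : Matrix m n α) (M22 : Matrix m m α) (M23 : Matrix m p α)
    (M31 : Matrix p n α) (M32 : Matrix p m α) (M33 : Matrix p p α) :
    Matrix (n ⊕ (m ⊕ p)) (n ⊕ (m ⊕ p)) α :=
  Matrix.fromBlocks M11 (Matrix.fromCols M12 M13) (Matrix.fromRows M21 M31)
    (Matrix.fromBlocks M22 M23 M32 M33)


open Matrix in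
lemma blk3_mul {n m p : Type*} [Fintype n] [Fintype m] [Fintype p] {α : Type*} [CommRing α]
    (A11 : Matrix n n α) (A12 : Matrix n m α) (A13 : Matrix n p α)
    (A21 : Matrix m n α) (A22 : Matrix m m α) (A23 : Matrix m p α)
    (A31 : Matrix p n α) (A32 : Matrix p m α) (A33 : Matrix p p α)
    (B11 : Matrix n n α) (B12 : Matrix n m α) (B13 : Matrix n p α)
    (B21 : Matrix m n α) (B22 : Matrix m m α) (B23 : Matrix m p α)
    (B31 : Matrix p n α) (B32 : Matrix p m α) (B33 : Matrix p p α) :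
    blk3 A11 A12 A13 A21 A22 A23 A31 A32 A33 * blk3 B11 B12 B13 B21 B22 B23 B31 B32 B33
      = blk3 (A11*B11 + A12*B21 + A13*B31) (A11*B12 + A12*B22 + A13*B32)
          (A11*B13 + A12*B23 + A13*B33)
          (A21*B11 + A22*B21 + A23*B31) (A21*B12 + A22*B22 + A23*B32)
          (A21*B13 + A22*B23 + A23*B33)
          (A31*B11 + A32*B21 + A33*B31) (A31*B12 + A32*B22 + A33*B32)
          (A31*B13 + A32*B23 + A33*B33) := by
  simp only [blk3, fromBlocks_multiply, fromCols_mul_fromRows, fromCols_mul_fromBlocks,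
    fromBlocks_mul_fromRows, Matrix.mul_fromCols, Matrix.fromRows_mul]
  ext (i|i|i) (j|j|j) <;> simp [Matrix.add_apply, Matrix.mul_apply] <;> ring

open Matrix in
lemma blk3_one {n m p : Type*} [Fintype n] [Fintype m] [Fintype p]
    [DecidableEq n] [DecidableEq m] [DecidableEq p] {α : Type*} [CommRing α] :
    blk3 (1 : Matrix n n α) 0 0 0 (1 : Matrix m m α) 0 0 0 (1 : Matrix p p α) = 1 := by
  simp only [blk3, fromCols_zero, fromRows_zero, fromBlocks_one]

open Matrix in
lemma blk3_sub {n m p : Type*} {α : Type*} [CommRing α]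
    (A11 : Matrix n n α) (A12 : Matrix n m α) (A13 : Matrix n p α)
    (A21 : Matrix m n α) (A22 : Matrix m m α) (A23 : Matrix m p α)
    (A31 : Matrix p n α) (A32 : Matrix p m α) (A33 : Matrix p p α)
    (B11 : Matrix n n α) (B12 : Matrix n m α) (B13 : Matrix n p α)
    (B21 : Matrix m n α) (B22 : Matrix m m α) (B23 : Matrix m p α)
    (B31 : Matrix p n α) (B32 : Matrix p m α) (B33 : Matrix p p α) :
    blk3 A11 A12 A13 A21 A22 A23 A31 A32 A33 - blk3 B11 B12 B13 B21 B22 B23 B31 B32 B33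
      = blk3 (A11-B11) (A12-B12) (A13-B13) (A21-B21) (A22-B22) (A23-B23)
          (A31-B31) (A32-B32) (A33-B33) := by
  ext (i|i|i) (j|j|j) <;> simp [blk3, Matrix.sub_apply]


lemma blk3_eq {n m p : Type*} {α : Type*}
    {A11 B11 : Matrix n n α} {A12 B12 : Matrix n m α} {A13 B13 : Matrix n p α}
    {A21 B21 : Matrix m n α} {A22 B22 : Matrix m m α} {A23 B23 : Matrix m p α}
    {A31 B31 : Matrix p n α} {A32 B32 : Matrix p m α} {A33 B33 : Matrix p p α}
    (h11 : A11 = B11) (h12 : A12 = B12) (h13 : A13 = B13)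
    (h21 : A21 = B21) (h22 : A22 = B22) (h23 : A23 = B23)
    (h31 : A31 = B31) (h32 : A32 = B32) (h33 : A33 = B33) :
    blk3 A11 A12 A13 A21 A22 A23 A31 A32 A33 = blk3 B11 B12 B13 B21 B22 B23 B31 B32 B33 := by
  subst h11 h12 h13 h21 h22 h23 h31 h32 h33; rfl

/-- Closed-loop design separation (sufficiency): if `(zI - A) Φx - B Φu = I` and the pair
`(P_c, M_c)` satisfies `Φx Δ_c = P_c`, `Φu Δ_c = M_c` with `Δ_c = (zI - A) P_c - B M_c`
invertible, then
`S = [[Φx, Φx B, Φx(zI - A) - I],[Φu, I + Φu B, Φu(zI - A)],[z⁻¹Δ_c⁻¹, z⁻¹Δ_c⁻¹B, z⁻¹Δ_c⁻¹(zI - A)]]`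
satisfies `S (I - R) = I` for `R = [[A + (1-z)I, B, 0],[0, 0, zM_c],[I, 0, I - zP_c]]`. -/
theorem design_separation_sufficiency {n m : Type*} [Fintype n] [Fintype m]
    [DecidableEq n] [DecidableEq m]
    (A : Matrix n n ℝ) (B : Matrix n m ℝ)
    (Pc : Matrix n n (RatFunc ℝ)) (Mc : Matrix m n (RatFunc ℝ))
    (Φx : Matrix n n (RatFunc ℝ)) (Φu : Matrix m n (RatFunc ℝ))
    (zA : Matrix n n (RatFunc ℝ))
    (hzA : zA = (RatFunc.X : RatFunc ℝ) • (1 : Matrix n n (RatFunc ℝ))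
        - A.map (algebraMap ℝ (RatFunc ℝ)))
    (haffine : zA * Φx - (B.map (algebraMap ℝ (RatFunc ℝ))) * Φu = 1)
    (Δc : Matrix n n (RatFunc ℝ))
    (hΔc : Δc = zA * Pc - B.map (algebraMap ℝ (RatFunc ℝ)) * Mc)
    (hΔcInv : IsUnit Δc.det)
    (hPc : Φx * Δc = Pc) (hMc : Φu * Δc = Mc)
    (R S : Matrix (n ⊕ (m ⊕ n)) (n ⊕ (m ⊕ n)) (RatFunc ℝ))
    (hR : R = blk3
      (A.map (algebraMap ℝ (RatFunc ℝ))
        + (1 - (RatFunc.X : RatFunc ℝ)) • (1 : Matrix n n (RatFunc ℝ)))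
      (B.map (algebraMap ℝ (RatFunc ℝ))) 0
      0 0 ((RatFunc.X : RatFunc ℝ) • Mc)
      (1 : Matrix n n (RatFunc ℝ)) 0
      ((1 : Matrix n n (RatFunc ℝ)) - (RatFunc.X : RatFunc ℝ) • Pc))
    (hS : S = blk3
      Φx (Φx * B.map (algebraMap ℝ (RatFunc ℝ))) (Φx * zA - 1)
      Φu (1 + Φu * B.map (algebraMap ℝ (RatFunc ℝ))) (Φu * zA)
      ((RatFunc.X : RatFunc ℝ)⁻¹ • Δc⁻¹)
      ((RatFunc.X : RatFunc ℝ)⁻¹ • (Δc⁻¹ * B.map (algebraMap ℝ (RatFunc ℝ))))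
      ((RatFunc.X : RatFunc ℝ)⁻¹ • (Δc⁻¹ * zA))) :
    S * (1 - R) = 1 := by
  have hX : (RatFunc.X : RatFunc ℝ) ≠ 0 := RatFunc.X_ne_zero
  set z : RatFunc ℝ := RatFunc.X with hz
  set Bm := B.map (algebraMap ℝ (RatFunc ℝ)) with hBm
  set Am := A.map (algebraMap ℝ (RatFunc ℝ)) with hAm
  have hPc' : Φx * (zA * Pc) - Φx * (Bm * Mc) = Pc := by
    rw [← Matrix.mul_sub, ← hΔc, hPc]
  have hMc' : Φu * (zA * Pc) - Φu * (Bm * Mc) = Mc := by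
    rw [← Matrix.mul_sub, ← hΔc, hMc]
  have hIR : 1 - R = blk3 zA (-Bm) 0 0 1 (-(z • Mc)) (-1) 0 (z • Pc) := by
    rw [hR, ← blk3_one, blk3_sub]
    refine blk3_eq ?_ (by simp) (by simp) (by simp) (by simp) (by simp) (by simp) (by simp)
      (by simp)
    rw [hzA, sub_smul, one_smul]; abel
  rw [hIR, hS, blk3_mul, ← blk3_one]
  refine blk3_eq ?_ ?_ ?_ ?_ ?_ ?_ ?_ ?_ ?_
  · simp only [Matrix.mul_zero, Matrix.mul_one, Matrix.mul_neg, Matrix.neg_mul, Matrix.mul_smul, Matrix.smul_mul, Matrix.one_mul, Matrix.sub_mul, Matrix.add_mul, Matrix.mul_assoc, add_zero, zero_add, smul_neg]; abel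
  · simp only [Matrix.mul_zero, Matrix.mul_one, Matrix.mul_neg, Matrix.neg_mul, Matrix.mul_smul, Matrix.smul_mul, Matrix.one_mul, Matrix.sub_mul, Matrix.add_mul, Matrix.mul_assoc, add_zero, zero_add, smul_neg]; abel
  · have h3 : z • (Φx * (zA * Pc)) - z • (Φx * (Bm * Mc)) = z • Pc := by
      rw [← smul_sub, hPc']
    simp only [Matrix.mul_zero, Matrix.mul_one, Matrix.mul_neg, Matrix.neg_mul, Matrix.mul_smul, Matrix.smul_mul, Matrix.one_mul, Matrix.sub_mul, Matrix.add_mul, Matrix.mul_assoc, add_zero, zero_add, smul_neg, smul_sub, smul_add]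
    rw [← h3]; abel
  · simp only [Matrix.mul_zero, Matrix.mul_one, Matrix.mul_neg, Matrix.neg_mul, Matrix.mul_smul, Matrix.smul_mul, Matrix.one_mul, Matrix.sub_mul, Matrix.add_mul, Matrix.mul_assoc, add_zero, zero_add, smul_neg]; abel
  · simp only [Matrix.mul_zero, Matrix.mul_one, Matrix.mul_neg, Matrix.neg_mul, Matrix.mul_smul, Matrix.smul_mul, Matrix.one_mul, Matrix.sub_mul, Matrix.add_mul, Matrix.mul_assoc, add_zero, zero_add, smul_neg]; abel
  · have h6 : z • (Φu * (zA * Pc)) - z • (Φu * (Bm * Mc)) = z • Mc := by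
      rw [← smul_sub, hMc']
    simp only [Matrix.mul_zero, Matrix.mul_one, Matrix.mul_neg, Matrix.neg_mul, Matrix.mul_smul, Matrix.smul_mul, Matrix.one_mul, Matrix.sub_mul, Matrix.add_mul, Matrix.mul_assoc, add_zero, zero_add, smul_neg, smul_sub, smul_add]
    rw [← h6]; abel
  · simp only [Matrix.mul_zero, Matrix.mul_one, Matrix.mul_neg, Matrix.neg_mul, Matrix.mul_smul, Matrix.smul_mul, Matrix.one_mul, Matrix.sub_mul, Matrix.add_mul, Matrix.mul_assoc, add_zero, zero_add, smul_neg]; abel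
  · simp only [Matrix.mul_zero, Matrix.mul_one, Matrix.mul_neg, Matrix.neg_mul, Matrix.mul_smul, Matrix.smul_mul, Matrix.one_mul, Matrix.sub_mul, Matrix.add_mul, Matrix.mul_assoc, add_zero, zero_add, smul_neg]; abel
  · have h9 : Δc⁻¹ * (zA * Pc) - Δc⁻¹ * (Bm * Mc) = 1 := by
      rw [← Matrix.mul_sub, ← hΔc, Matrix.nonsing_inv_mul _ hΔcInv]
    simp only [Matrix.mul_zero, Matrix.mul_one, Matrix.mul_neg, Matrix.neg_mul, Matrix.mul_smul, Matrix.smul_mul, Matrix.one_mul, Matrix.sub_mul, Matrix.add_mul, Matrix.mul_assoc, add_zero, zero_add, smul_neg, smul_smul, inv_mul_cancel₀ hX, mul_inv_cancel₀ hX, one_smul]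
    rw [← h9]; abel
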